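/- Let E be a category with functors f : F ⥤ E and g : G ⥤ E, and let u : F ⥤ G be a functor over E (g ∘ u = f) such that f is an isofibration. Then the underlying functor of u is an isofibration if and only if for every object S of E, the induced functor on fibre categories F_S ⥤ G_S is an isofibration. -/

import Mathlib

open CategoryTheory CategoryTheory.Limits CategoryTheory.Functor

universe w₁ w₂ w₃ w₄ v₁ v₂ v₃ v₄

namespace PaperStacks

/-- A functor `p : A ⥤ B` is an isofibration if every isomorphism `f : p.obj a ≅ b` in `B`
lifts to an isomorphism `e : a ≅ a'` in `A` with `p.obj a' = b` and `p.map e.hom = f.hom`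
(up to the identification `p.obj a' = b`). -/
def IsIsofibration {A : Type w₁} {B : Type w₂} [Category.{v₁} A] [Category.{v₂} B]
    (p : A ⥤ B) : Prop :=
  ∀ (a : A) (b : B) (f : p.obj a ≅ b), ∃ (a' : A) (e : a ≅ a') (h : p.obj a' = b),
    p.map e.hom = f.hom ≫ eqToHom h.symm

/-- A surjective equivalence: an equivalence of categories that is surjective on objects. -/
def IsSurjectiveEquivalence {A : Type w₁} {B : Type w₂} [Category.{v₁} A] [Category.{v₂} B]
    (p : A ⥤ B) : Prop :=
  p.IsEquivalence ∧ Function.Surjective p.obj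

/-- The functor induced on fibre categories by a functor `u : F ⥤ G` over `E`. -/
def fiberMap {E : Type w₁} {F : Type w₂} {G : Type w₃}
    [Category.{v₁} E] [Category.{v₂} F] [Category.{v₃} G]
    {p : F ⥤ E} {q : G ⥤ E} (u : F ⥤ G) (h : u ⋙ q = p) (S : E) :
    Functor.Fiber p S ⥤ Functor.Fiber q S :=
  Functor.Fiber.inducedFunctor (F := Functor.Fiber.fiberInclusion ⋙ u)
    (by rw [Functor.assoc, h]; exact Functor.Fiber.fiberInclusion_comp_eq_const)

/-- An isomorphism in a fibre category built from an isomorphism in the total category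
whose `hom` lifts the identity. -/
def fiberIsoMk {𝒮 : Type w₁} {𝒳 : Type w₂} [Category.{v₁} 𝒮] [Category.{v₂} 𝒳]
    {p : 𝒳 ⥤ 𝒮} {S : 𝒮} {a b : Functor.Fiber p S} (e : a.1 ≅ b.1)
    (h : p.IsHomLift (𝟙 S) e.hom) : a ≅ b where
  hom := ⟨e.hom, h⟩
  inv := ⟨e.inv, by
    have : p.IsHomLift (Iso.refl S).hom e.hom := h
    simpa using IsHomLift.inv_lift_inv p (Iso.refl S) e⟩
  hom_inv_id := Functor.Fiber.hom_ext e.hom_inv_id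
  inv_hom_id := Functor.Fiber.hom_ext e.inv_hom_id

/-- Given `f : F ⥤ E` an isofibration, `g : G ⥤ E` and `u : F ⥤ G` over `E`,
the functor `u` is an isofibration if and only if all induced functors on fibre categories
are isofibrations. -/
theorem isIsofibration_iff_fiberwise_isIsofibration
    {E : Type w₁} {F : Type w₂} {G : Type w₃}
    [Category.{v₁} E] [Category.{v₂} F] [Category.{v₃} G]
    {f : F ⥤ E} {g : G ⥤ E} (u : F ⥤ G) (hu : u ⋙ g = f)
    (hf : IsIsofibration f) :
    IsIsofibration u ↔ ∀ S : E, IsIsofibration (fiberMap u hu S) := by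
  constructor
  · intro h S a b φ
    have hga : g.obj (u.obj a.1) = S := (Functor.congr_obj hu a.1).trans a.2
    set φ' : u.obj a.1 ≅ b.1 :=
      ⟨φ.hom.1, φ.inv.1, congrArg Subtype.val φ.hom_inv_id,
        congrArg Subtype.val φ.inv_hom_id⟩ with hφ'
    obtain ⟨a', e, hb, he⟩ := h a.1 b.1 φ'
    have hfa' : f.obj a' = S := by
      rw [← Functor.congr_obj hu a', Functor.comp_obj, hb, b.2]
    have hlift : f.IsHomLift (𝟙 S) e.hom := by
      apply IsHomLift.of_fac' f (𝟙 S) e.hom a.2 hfa'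
      have h3 : f.map e.hom = eqToHom (Functor.congr_obj hu a.1).symm ≫
          g.map (u.map e.hom) ≫ eqToHom (Functor.congr_obj hu a') := by
        have := Functor.congr_hom hu.symm e.hom
        simpa using this
      have hinst : g.IsHomLift (𝟙 S) φ.hom.1 := φ.hom.2
      have hφh : g.map φ.hom.1 = eqToHom hga ≫ 𝟙 S ≫ eqToHom b.2.symm :=
        IsHomLift.fac' g (𝟙 S) φ.hom.1
      rw [h3, he, hφ']
      simp only [Iso.trans_hom, eqToIso.hom]
      erw [g.map_comp, hφh]
      simp [eqToHom_map]
    refine ⟨Functor.Fiber.mk hfa', fiberIsoMk (a := a) (b := Functor.Fiber.mk hfa') e hlift,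
      Subtype.ext hb, ?_⟩
    apply Functor.Fiber.hom_ext
    rw [Functor.map_comp, eqToHom_map]
    exact he
  · intro h a b φ
    have hga : g.obj (u.obj a) = f.obj a := Functor.congr_obj hu a
    set ψ : f.obj a ≅ g.obj b := eqToIso hga.symm ≪≫ g.mapIso φ with hψ
    obtain ⟨a₁, e₁, h₁, he₁⟩ := hf a (g.obj b) ψ
    have hga₁ : g.obj (u.obj a₁) = g.obj b := (Functor.congr_obj hu a₁).trans h₁
    set χ : u.obj a₁ ≅ b := (u.mapIso e₁).symm ≪≫ φ with hχdef
    have hiso : f.mapIso e₁ = ψ ≪≫ eqToIso h₁.symm := Iso.ext he₁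
    have he₁inv : f.map e₁.inv = eqToHom h₁ ≫ ψ.inv := by
      have := congrArg Iso.inv hiso
      simpa using this
    have hχ : g.map χ.hom = eqToHom hga₁ := by
      show g.map (u.map e₁.inv ≫ φ.hom) = _
      rw [g.map_comp]
      have hg2 : g.map (u.map e₁.inv) = (u ⋙ g).map e₁.inv := rfl
      rw [hg2, Functor.congr_hom hu e₁.inv, he₁inv, hψ]
      simp
    have hχl : g.IsHomLift (𝟙 (g.obj b)) χ.hom :=
      IsHomLift.of_commsq g _ χ.hom hga₁ rfl (by simp [hχ])
    obtain ⟨a', e₂, h₂, he₂⟩ := h (g.obj b) (Functor.Fiber.mk h₁) (Functor.Fiber.mk rfl)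
      (fiberIsoMk (p := g) (a := (fiberMap u hu (g.obj b)).obj (Functor.Fiber.mk h₁))
        (b := Functor.Fiber.mk rfl) χ hχl)
    have hval : u.map (Functor.Fiber.fiberInclusion.map e₂.hom) = χ.hom ≫
        eqToHom (congrArg (Functor.Fiber.fiberInclusion.obj) h₂.symm) := by
      have h5 := congrArg Functor.Fiber.fiberInclusion.map he₂
      rw [Functor.map_comp, eqToHom_map] at h5
      exact h5
    let e₂' : a₁ ≅ a'.1 := Functor.Fiber.fiberInclusion.mapIso e₂
    refine ⟨a'.1, e₁ ≪≫ e₂', congrArg Subtype.val h₂, ?_⟩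
    show u.map (e₁.hom ≫ Functor.Fiber.fiberInclusion.map e₂.hom) = _
    erw [u.map_comp, hval, hχdef]
    simp
    rfl

end PaperStacks
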